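/- The pseudo-likelihood collection of m-pairs 𝒮 = {({1},{1}^c), ({2},{2}^c), ..., ({m},{m}^c)}, i.e., all singletons conditioned on their complements, ensures identifiability for any family of strictly positive distributions on a finite product space: if two strictly positive distributions p and q on ∏_{i=1}^m S_i satisfy p(X_i|X_{-i}) = q(X_i|X_{-i}) for all i, then p = q. -/

import Mathlib

open Finset

/-- The pseudo-likelihood collection of m-pairs ensures identifiability: if two strictly
positive distributions on a finite product space have the same single-coordinate conditionals
`p(X_i | X_{-i})` for every coordinate `i`, then they are equal. -/
theorem pseudo_likelihood_identifiability
    {m : ℕ} (S : Fin m → Type) [∀ i, Fintype (S i)] [∀ i, DecidableEq (S i)]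
    [∀ i, Nonempty (S i)]
    (p q : (∀ i, S i) → ℝ)
    (hp : ∀ x, 0 < p x) (hq : ∀ x, 0 < q x)
    (hp1 : ∑ x, p x = 1) (hq1 : ∑ x, q x = 1)
    (hcond : ∀ (i : Fin m) (x : ∀ j, S j),
      p x / (∑ a : S i, p (Function.update x i a)) =
      q x / (∑ a : S i, q (Function.update x i a))) :
    p = q := by
  have hSp : ∀ (i : Fin m) (x : ∀ j, S j), 0 < ∑ a : S i, p (Function.update x i a) :=
    fun i x => Finset.sum_pos (fun a _ => hp _) Finset.univ_nonempty
  have hSq : ∀ (i : Fin m) (x : ∀ j, S j), 0 < ∑ a : S i, q (Function.update x i a) :=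
    fun i x => Finset.sum_pos (fun a _ => hq _) Finset.univ_nonempty
  -- key: the ratio is invariant under single-coordinate updates
  have key : ∀ (i : Fin m) (x : ∀ j, S j) (a : S i),
      p (Function.update x i a) * q x = p x * q (Function.update x i a) := by
    intro i x a
    set Sp := ∑ b : S i, p (Function.update x i b) with hSpdef
    set Sq := ∑ b : S i, q (Function.update x i b) with hSqdef
    have h1 := hcond i x
    have h2 := hcond i (Function.update x i a)
    have ep : (∑ b : S i, p (Function.update (Function.update x i a) i b)) = Sp :=
      Finset.sum_congr rfl fun b _ => by rw [Function.update_idem]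
    have eq' : (∑ b : S i, q (Function.update (Function.update x i a) i b)) = Sq :=
      Finset.sum_congr rfl fun b _ => by rw [Function.update_idem]
    rw [ep, eq'] at h2
    have hSp0 := (hSp i x).ne'
    have hSq0 := (hSq i x).ne'
    rw [div_eq_div_iff hSp0 hSq0] at h1 h2
    apply mul_right_cancel₀ hSq0
    linear_combination q x * h2 - q (Function.update x i a) * h1
  -- ratio is globally constant
  have const : ∀ x y : ∀ j, S j, p x * q y = p y * q x := by
    intro x y
    have main : ∀ (s : Finset (Fin m)) (x y : ∀ j, S j),
        (∀ j ∉ s, x j = y j) → p x * q y = p y * q x := by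
      intro s
      induction s using Finset.induction_on with
      | empty =>
          intro x y h
          have : x = y := funext fun j => h j (Finset.notMem_empty j)
          rw [this]
      | insert _ _ hni ih =>
          rename_i i t
          intro x y h
          have hxy : ∀ j ∉ t, Function.update x i (y i) j = y j := by
            intro j hj
            by_cases hji : j = i
            · subst hji; simp
            · rw [Function.update_of_ne hji]
              exact h j (by simp [hji, hj])
          have h1 := ih (Function.update x i (y i)) y hxy
          have h2 := key i x (y i)
          -- p x * q y = p y * q x
          have hqx := (hq x).ne'
          have hqu := (hq (Function.update x i (y i))).ne'
          -- from h2: p u * q x = p x * q u ; from h1 : p u * q y = p y * q u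
          -- so p x * q y * q u = p x * q u * q y = p u * q x * q y = p y * q u * q x
          apply mul_right_cancel₀ hqu
          linear_combination q x * h1 - q y * h2
    exact main Finset.univ x y (fun j hj => absurd (Finset.mem_univ j) hj)
  funext x
  have : p x * (∑ y, q y) = (∑ y, p y) * q x := by
    rw [Finset.mul_sum, Finset.sum_mul]
    exact Finset.sum_congr rfl fun y _ => const x y
  rw [hp1, hq1, mul_one, one_mul] at this
  exact this
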